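/- Strict suboptimality of every finite maximum degree: for every integer d ≥ 2 and every probability vector p ∈ ℝ^d, there exist an integer D > d and a probability vector q ∈ ℝ^D such that the extended-valued integral ∫⁻_{t∈(0,1)} (−log(1−t))/q'(t) dt is strictly smaller than ∫⁻_{t∈(0,1)} (−log(1−t))/p'(t) dt. -/

import Mathlib

open MeasureTheory Real

/-- `p'(t) = ∑_{i=1}^d i·p_i·t^{i-1}`, where the probability vector `p : Fin d → ℝ`
has `p i` corresponding to degree `i + 1`. -/
noncomputable def pderiv {d : ℕ} (p : Fin d → ℝ) (t : ℝ) : ℝ :=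
  ∑ i : Fin d, ((i : ℕ) + 1 : ℝ) * p i * t ^ (i : ℕ)

lemma meas_integrand {n : ℕ} (q : Fin n → ℝ) :
    Measurable fun t : ℝ => ENNReal.ofReal ((-Real.log (1 - t)) / pderiv q t) := by
  apply Measurable.ennreal_ofReal
  apply Measurable.div
  · exact (Real.measurable_log.comp (measurable_const.sub measurable_id)).neg
  · unfold pderiv
    exact Finset.measurable_sum _ fun i _ => (measurable_id.pow_const _).const_mul _

lemma neg_log_le_aux {u m : ℝ} (hu : 0 < u) (hm : 0 < m) :
    -Real.log u ≤ -Real.log m + 2 * Real.sqrt m / Real.sqrt u := by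
  have h1 : Real.log (Real.sqrt (m / u)) ≤ Real.sqrt (m / u) - 1 :=
    Real.log_le_sub_one_of_pos (Real.sqrt_pos.mpr (by positivity))
  have h2 : Real.log (Real.sqrt (m / u)) = (Real.log m - Real.log u) / 2 := by
    rw [Real.log_sqrt (by positivity), Real.log_div hm.ne' hu.ne']
  have h3 : Real.sqrt (m / u) = Real.sqrt m / Real.sqrt u := Real.sqrt_div hm.le u
  have h4 : (Real.log m - Real.log u) / 2 ≤ Real.sqrt m / Real.sqrt u - 1 := by
    rw [← h2, ← h3]; exact h1
  have h5 : 2 * Real.sqrt m / Real.sqrt u = 2 * (Real.sqrt m / Real.sqrt u) := by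
    ring
  rw [h5]; linarith

lemma pderiv_pos {n : ℕ} {q : Fin n → ℝ} (hq0 : ∀ i, 0 ≤ q i) (hq1 : ∑ i, q i = 1)
    {t : ℝ} (ht : 0 < t) : 0 < pderiv q t := by
  have hex : ∃ j, 0 < q j := by
    by_contra h
    push_neg at h
    have : ∑ i, q i ≤ 0 := Finset.sum_nonpos fun i _ => h i
    linarith
  obtain ⟨j, hj⟩ := hex
  apply Finset.sum_pos' (fun i _ => mul_nonneg (mul_nonneg (by positivity) (hq0 i)) (pow_nonneg ht.le _))
  exact ⟨j, Finset.mem_univ j,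
    mul_pos (mul_pos (by positivity) hj) (pow_pos ht _)⟩

lemma pderiv_le {n : ℕ} {q : Fin n → ℝ} (hq0 : ∀ i, 0 ≤ q i) (hq1 : ∑ i, q i = 1)
    {t : ℝ} (ht0 : 0 ≤ t) (ht1 : t ≤ 1) : pderiv q t ≤ n := by
  have : pderiv q t ≤ ∑ i : Fin n, (n : ℝ) * q i := by
    apply Finset.sum_le_sum
    intro i _
    have h1 : t ^ (i : ℕ) ≤ 1 := pow_le_one₀ ht0 ht1
    have h2 : ((i : ℕ) + 1 : ℝ) ≤ n := by
      have := i.isLt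
      exact_mod_cast Nat.succ_le_of_lt this
    have h4 : ((i : ℕ) + 1 : ℝ) * t ^ (i : ℕ) ≤ ((i : ℕ) + 1 : ℝ) :=
      mul_le_of_le_one_right (by positivity) h1
    calc ((i : ℕ) + 1 : ℝ) * q i * t ^ (i : ℕ)
        = (((i : ℕ) + 1 : ℝ) * t ^ (i : ℕ)) * q i := by ring
      _ ≤ (n : ℝ) * q i := mul_le_mul_of_nonneg_right (h4.trans h2) (hq0 i)
  rw [← Finset.mul_sum, hq1, mul_one] at this
  exact this

lemma sum_extend {d D : ℕ} (h : d ≤ D) (g : ℕ → ℝ) (hg : ∀ j, d ≤ j → g j = 0) :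
    ∑ i : Fin D, g i = ∑ i : Fin d, g i := by
  rw [Fin.sum_univ_eq_sum_range, Fin.sum_univ_eq_sum_range]
  exact (Finset.sum_subset (Finset.range_subset_range.mpr h)
    (fun x _ hx => hg x (by simpa using hx))).symm


lemma rpow_int_bound {s : ℝ} (hs0 : 0 ≤ s) (hs1 : s ≤ 1) :
    ∫⁻ t in Set.Ico s 1, ENNReal.ofReal ((1 - t) ^ (-(1/2) : ℝ)) ≤
      ENNReal.ofReal (2 * Real.sqrt (1 - s)) := by
  rw [setLIntegral_congr (Ioo_ae_eq_Ico (a := s) (b := (1:ℝ))).symm]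
  have hii : IntervalIntegrable (fun t : ℝ => (1 - t) ^ (-(1/2) : ℝ)) volume s 1 := by
    have h := (intervalIntegral.intervalIntegrable_rpow' (a := 0) (b := 1 - s)
      (r := -(1/2)) (by norm_num)).comp_sub_left 1
    simpa using h.symm
  have hint : IntegrableOn (fun t : ℝ => (1 - t) ^ (-(1/2) : ℝ)) (Set.Ioo s 1) volume :=
    (intervalIntegrable_iff_integrableOn_Ioo_of_le hs1).mp hii
  have hae : 0 ≤ᵐ[volume.restrict (Set.Ioo s 1)]
      fun t : ℝ => (1 - t) ^ (-(1/2) : ℝ) := by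
    filter_upwards [ae_restrict_mem measurableSet_Ioo] with t ht
    exact Real.rpow_nonneg (by linarith [ht.2]) _
  rw [← ofReal_integral_eq_lintegral_ofReal hint hae]
  apply ENNReal.ofReal_le_ofReal
  have h1 : ∫ t in Set.Ioo s 1, (1 - t) ^ (-(1/2) : ℝ) =
      ∫ t in s..1, (1 - t) ^ (-(1/2) : ℝ) := by
    rw [intervalIntegral.integral_of_le hs1, integral_Ioc_eq_integral_Ioo]
  have h2 : ∫ t in s..1, (1 - t) ^ (-(1/2) : ℝ) = ∫ t in (0:ℝ)..(1-s), t ^ (-(1/2) : ℝ) := by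
    have := intervalIntegral.integral_comp_sub_left (a := s) (b := 1)
      (fun t : ℝ => t ^ (-(1/2) : ℝ)) 1
    simpa using this
  have h3 : ∫ t in (0:ℝ)..(1-s), t ^ (-(1/2) : ℝ) =
      ((1-s) ^ ((1:ℝ)/2) - 0 ^ ((1:ℝ)/2)) / ((1:ℝ)/2) := by
    rw [integral_rpow (Or.inl (by norm_num))]
    norm_num
  rw [h1, h2, h3, Real.zero_rpow (by norm_num), ← Real.sqrt_eq_rpow]
  rw [sub_zero]
  have : Real.sqrt (1 - s) / ((1:ℝ)/2) = 2 * Real.sqrt (1 - s) := by ring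
  rw [this]

lemma loglint_bound {s : ℝ} (hs0 : 0 ≤ s) (hs1 : s < 1) :
    ∫⁻ t in Set.Ico s 1, ENNReal.ofReal (-Real.log (1 - t)) ≤
      ENNReal.ofReal ((1 - s) * (-Real.log (1 - s)) + 4 * (1 - s)) := by
  have hm : 0 < 1 - s := by linarith
  have hlogs : 0 ≤ -Real.log (1 - s) := by
    have : Real.log (1 - s) ≤ 0 := Real.log_nonpos hm.le (by linarith)
    linarith
  have key : ∫⁻ t in Set.Ico s 1, ENNReal.ofReal (-Real.log (1 - t)) ≤
      ∫⁻ t in Set.Ico s 1, (ENNReal.ofReal (-Real.log (1 - s)) +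
        ENNReal.ofReal (2 * Real.sqrt (1 - s)) *
          ENNReal.ofReal ((1 - t) ^ (-(1/2) : ℝ))) := by
    apply setLIntegral_mono
    · exact measurable_const.add (measurable_const.mul
        (((measurable_const.sub measurable_id).pow_const (-(1/2) : ℝ)).ennreal_ofReal))
    · intro t ht
      have htu : 0 < 1 - t := by linarith [ht.2]
      have hle : -Real.log (1 - t) ≤
          -Real.log (1 - s) + 2 * Real.sqrt (1 - s) * (1 - t) ^ (-(1/2) : ℝ) := by
        have h1 := neg_log_le_aux htu hm
        have h2 : (1 - t) ^ (-(1/2) : ℝ) = (Real.sqrt (1 - t))⁻¹ := by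
          rw [Real.rpow_neg htu.le, Real.sqrt_eq_rpow]
        rw [h2]
        have h3 : 2 * Real.sqrt (1 - s) / Real.sqrt (1 - t) =
            2 * Real.sqrt (1 - s) * (Real.sqrt (1 - t))⁻¹ := by
          rw [div_eq_mul_inv]
        linarith [h3 ▸ h1]
      calc ENNReal.ofReal (-Real.log (1 - t)) ≤
          ENNReal.ofReal (-Real.log (1 - s) +
            2 * Real.sqrt (1 - s) * (1 - t) ^ (-(1/2) : ℝ)) := ENNReal.ofReal_le_ofReal hle
        _ = _ := by
          rw [ENNReal.ofReal_add hlogs (by positivity), ENNReal.ofReal_mul (by positivity)]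
  calc ∫⁻ t in Set.Ico s 1, ENNReal.ofReal (-Real.log (1 - t))
      ≤ _ := key
    _ = ENNReal.ofReal (-Real.log (1 - s)) * volume (Set.Ico s 1) +
        ENNReal.ofReal (2 * Real.sqrt (1 - s)) *
          ∫⁻ t in Set.Ico s 1, ENNReal.ofReal ((1 - t) ^ (-(1/2) : ℝ)) := by
      rw [lintegral_add_left measurable_const, setLIntegral_const,
        lintegral_const_mul' _ _ ENNReal.ofReal_ne_top]
    _ ≤ ENNReal.ofReal (-Real.log (1 - s)) * ENNReal.ofReal (1 - s) +
        ENNReal.ofReal (2 * Real.sqrt (1 - s)) * ENNReal.ofReal (2 * Real.sqrt (1 - s)) := by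
      gcongr
      · rw [Real.volume_Ico]
      · exact rpow_int_bound hs0 hs1.le
    _ = ENNReal.ofReal ((1 - s) * (-Real.log (1 - s)) + 4 * (1 - s)) := by
      rw [← ENNReal.ofReal_mul hlogs, ← ENNReal.ofReal_mul (by positivity),
        ← ENNReal.ofReal_add (by positivity) (by positivity)]
      congr 1
      have : Real.sqrt (1 - s) * Real.sqrt (1 - s) = 1 - s := Real.mul_self_sqrt hm.le
      nlinarith [this]

lemma neg_log_nonneg {t : ℝ} (ht0 : 0 ≤ t) (ht : t < 1) : 0 ≤ -Real.log (1 - t) := by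
  have : Real.log (1 - t) ≤ 0 := Real.log_nonpos (by linarith) (by linarith)
  linarith

lemma bound_I1 {d n : ℕ} {p : Fin d → ℝ} (hp0 : ∀ i, 0 ≤ p i) (hp1 : ∑ i, p i = 1)
    {q : Fin n → ℝ} {ε s : ℝ} (hε : ε < 1) (hs : s ≤ 1)
    (hq : ∀ t ∈ Set.Ioo (0:ℝ) s, (1 - ε) * pderiv p t ≤ pderiv q t) :
    ∫⁻ t in Set.Ioo (0:ℝ) s, ENNReal.ofReal ((-Real.log (1 - t)) / pderiv q t) ≤
      ENNReal.ofReal (1 / (1 - ε)) *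
        ∫⁻ t in Set.Ioo (0:ℝ) s, ENNReal.ofReal ((-Real.log (1 - t)) / pderiv p t) := by
  rw [← lintegral_const_mul' _ _ ENNReal.ofReal_ne_top]
  apply setLIntegral_mono ((meas_integrand p).const_mul _)
  intro t ht
  have ht0 : 0 < t := ht.1
  have ht1 : t < 1 := lt_of_lt_of_le ht.2 hs
  have hp' : 0 < pderiv p t := pderiv_pos hp0 hp1 ht0
  have h1ε : 0 < 1 - ε := by linarith
  have hq' : 0 < (1 - ε) * pderiv p t := by positivity
  have ha : 0 ≤ -Real.log (1 - t) := neg_log_nonneg ht0.le ht1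
  rw [← ENNReal.ofReal_mul (by positivity)]
  apply ENNReal.ofReal_le_ofReal
  calc (-Real.log (1 - t)) / pderiv q t
      ≤ (-Real.log (1 - t)) / ((1 - ε) * pderiv p t) :=
        div_le_div_of_nonneg_left ha hq' (hq t ht)
    _ = 1 / (1 - ε) * ((-Real.log (1 - t)) / pderiv p t) := by
        rw [div_mul_div_comm, one_mul]

lemma bound_I2 {n : ℕ} (q : Fin n → ℝ) {c s : ℝ} (hc : 0 < c) (hs0 : 0 ≤ s) (hs1 : s < 1)
    (hq : ∀ t ∈ Set.Ico s (1:ℝ), c ≤ pderiv q t) :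
    ∫⁻ t in Set.Ico s (1:ℝ), ENNReal.ofReal ((-Real.log (1 - t)) / pderiv q t) ≤
      ENNReal.ofReal ((1 / c) * ((1 - s) * (-Real.log (1 - s)) + 4 * (1 - s))) := by
  have step1 : ∫⁻ t in Set.Ico s (1:ℝ), ENNReal.ofReal ((-Real.log (1 - t)) / pderiv q t) ≤
      ENNReal.ofReal (1 / c) * ∫⁻ t in Set.Ico s (1:ℝ), ENNReal.ofReal (-Real.log (1 - t)) := by
    rw [← lintegral_const_mul' _ _ ENNReal.ofReal_ne_top]
    apply setLIntegral_mono
    · exact ((Real.measurable_log.comp (measurable_const.sub measurable_id)).neg.ennreal_ofReal).const_mul _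
    · intro t ht
      have ha : 0 ≤ -Real.log (1 - t) := neg_log_nonneg (hs0.trans ht.1) ht.2
      rw [← ENNReal.ofReal_mul (by positivity)]
      apply ENNReal.ofReal_le_ofReal
      calc (-Real.log (1 - t)) / pderiv q t ≤ (-Real.log (1 - t)) / c :=
            div_le_div_of_nonneg_left ha hc (hq t ht)
        _ = 1 / c * (-Real.log (1 - t)) := by rw [one_div, inv_mul_eq_div]
  calc _ ≤ _ := step1
    _ ≤ ENNReal.ofReal (1 / c) *
        ENNReal.ofReal ((1 - s) * (-Real.log (1 - s)) + 4 * (1 - s)) := by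
      gcongr
      exact loglint_bound hs0 hs1
    _ = _ := by rw [← ENNReal.ofReal_mul (by positivity)]

lemma bound_I3 {n : ℕ} {p : Fin n → ℝ} (hp0 : ∀ i, 0 ≤ p i) (hp1 : ∑ i, p i = 1)
    (hn : 0 < n) {s : ℝ} (hs0 : 0 < s) (hs1 : s < 1) :
    ENNReal.ofReal ((-Real.log (1 - s)) / n) * ENNReal.ofReal (1 - s) ≤
      ∫⁻ t in Set.Ico s (1:ℝ), ENNReal.ofReal ((-Real.log (1 - t)) / pderiv p t) := by
  have := setLIntegral_const (μ := volume) (Set.Ico s (1:ℝ)) (ENNReal.ofReal ((-Real.log (1 - s)) / n))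
  rw [Real.volume_Ico] at this
  rw [← this]
  apply setLIntegral_mono (meas_integrand p)
  intro t ht
  apply ENNReal.ofReal_le_ofReal
  have ht0 : 0 < t := lt_of_lt_of_le hs0 ht.1
  have hp' : 0 < pderiv p t := pderiv_pos hp0 hp1 ht0
  have hpd : pderiv p t ≤ n := pderiv_le hp0 hp1 ht0.le ht.2.le
  have hlog : -Real.log (1 - s) ≤ -Real.log (1 - t) := by
    have h1 : (0:ℝ) < 1 - t := by linarith [ht.2]
    have h2 : 1 - t ≤ 1 - s := by linarith [ht.1]
    have := Real.log_le_log h1 h2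
    linarith
  exact div_le_div₀ (neg_log_nonneg ht0.le ht.2) hlog hp' hpd

noncomputable def qext {d : ℕ} (p : Fin d → ℝ) (k : ℕ) (ε : ℝ) : Fin (k+1) → ℝ :=
  fun i => (1 - ε) * (if h : (i : ℕ) < d then p ⟨(i : ℕ), h⟩ else 0) +
    (if (i : ℕ) = k then ε else 0)

lemma qext_nonneg {d : ℕ} {p : Fin d → ℝ} (hp0 : ∀ i, 0 ≤ p i) {k : ℕ} {ε : ℝ}
    (hε0 : 0 ≤ ε) (hε1 : ε ≤ 1) : ∀ i, 0 ≤ qext p k ε i := by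
  intro i
  unfold qext
  have h1 : (0:ℝ) ≤ 1 - ε := by linarith
  apply add_nonneg
  · apply mul_nonneg h1
    split
    · exact hp0 _
    · exact le_refl 0
  · split
    · exact hε0
    · exact le_refl 0

lemma qext_sum {d : ℕ} {p : Fin d → ℝ} (hp1 : ∑ i, p i = 1) {k : ℕ} (hdk : d ≤ k) (ε : ℝ) :
    ∑ i, qext p k ε i = 1 := by
  unfold qext
  rw [Finset.sum_add_distrib]
  have h1 : ∑ i : Fin (k+1), (1 - ε) * (if h : (i : ℕ) < d then p ⟨(i : ℕ), h⟩ else 0) =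
      (1 - ε) * ∑ i : Fin (k+1), (if h : (i : ℕ) < d then p ⟨(i : ℕ), h⟩ else 0) := by
    rw [Finset.mul_sum]
  have h2 : ∑ i : Fin (k+1), (if h : (i : ℕ) < d then p ⟨(i : ℕ), h⟩ else 0) = 1 := by
    rw [sum_extend (Nat.le_succ_of_le hdk) (fun j => if h : j < d then p ⟨j, h⟩ else 0)
      (fun j hj => dif_neg (by omega))]
    rw [← hp1]
    apply Finset.sum_congr rfl
    intro i _
    rw [dif_pos i.isLt]
  have h3 : ∑ i : Fin (k+1), (if (i : ℕ) = k then ε else 0) = ε := by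
    rw [Fin.sum_univ_eq_sum_range (fun j => if j = k then ε else 0)]
    rw [Finset.sum_ite_eq' (Finset.range (k+1)) k (fun _ => ε)]
    simp
  rw [h1, h2, h3]
  ring

lemma qext_pderiv {d : ℕ} (p : Fin d → ℝ) {k : ℕ} (hdk : d ≤ k) (ε : ℝ) (t : ℝ) :
    pderiv (qext p k ε) t = (1 - ε) * pderiv p t + ε * ((k : ℝ) + 1) * t ^ k := by
  unfold pderiv qext
  have hsplit : ∀ i : Fin (k+1),
      ((i : ℕ) + 1 : ℝ) * ((1 - ε) * (if h : (i : ℕ) < d then p ⟨(i : ℕ), h⟩ else 0) +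
        (if (i : ℕ) = k then ε else 0)) * t ^ (i : ℕ) =
      (1 - ε) * (((i : ℕ) + 1 : ℝ) * (if h : (i : ℕ) < d then p ⟨(i : ℕ), h⟩ else 0) * t ^ (i : ℕ)) +
      ((i : ℕ) + 1 : ℝ) * (if (i : ℕ) = k then ε else 0) * t ^ (i : ℕ) := by
    intro i; ring
  rw [Finset.sum_congr rfl (fun i _ => hsplit i), Finset.sum_add_distrib, ← Finset.mul_sum]
  have h2 : ∑ i : Fin (k+1),
      (((i : ℕ) + 1 : ℝ) * (if h : (i : ℕ) < d then p ⟨(i : ℕ), h⟩ else 0) * t ^ (i : ℕ)) =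
      ∑ i : Fin d, (((i : ℕ) + 1 : ℝ) * p i * t ^ (i : ℕ)) := by
    rw [sum_extend (Nat.le_succ_of_le hdk)
      (fun j => ((j : ℝ) + 1) * (if h : j < d then p ⟨j, h⟩ else 0) * t ^ j)
      (fun j hj => by rw [dif_neg (by omega : ¬ j < d)]; ring)]
    apply Finset.sum_congr rfl
    intro i _
    rw [dif_pos i.isLt]
  have h3 : ∑ i : Fin (k+1), ((i : ℕ) + 1 : ℝ) * (if (i : ℕ) = k then ε else 0) * t ^ (i : ℕ) =
      ε * ((k : ℝ) + 1) * t ^ k := by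
    rw [Finset.sum_eq_single (⟨k, Nat.lt_succ_self k⟩ : Fin (k+1))]
    · simp only [if_pos rfl]
      push_cast
      ring
    · intro b _ hb
      have hbk : (b : ℕ) ≠ k := by
        intro h; apply hb; ext; exact h
      rw [if_neg hbk]; ring
    · intro h; exact absurd (Finset.mem_univ _) h
  rw [h2, h3]

set_option maxHeartbeats 2000000

theorem stmt_10 (d : ℕ) (hd : 2 ≤ d) (p : Fin d → ℝ)
    (hp0 : ∀ i, 0 ≤ p i) (hp1 : ∑ i, p i = 1) :
    ∃ D : ℕ, d < D ∧ ∃ q : Fin D → ℝ, (∀ i, 0 ≤ q i) ∧ ∑ i, q i = 1 ∧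
      (∫⁻ t in Set.Ioo (0 : ℝ) 1,
          ENNReal.ofReal ((-Real.log (1 - t)) / pderiv q t)) <
        ∫⁻ t in Set.Ioo (0 : ℝ) 1,
          ENNReal.ofReal ((-Real.log (1 - t)) / pderiv p t) := by
  classical
  by_cases hF : (∫⁻ t in Set.Ioo (0 : ℝ) 1,
      ENNReal.ofReal ((-Real.log (1 - t)) / pderiv p t)) = ⊤
  · -- infinite case: use the point mass on degree 1
    refine ⟨d + 1, by omega, fun i => if (i : ℕ) = 0 then 1 else 0, ?_, ?_, ?_⟩
    · intro i; dsimp only; split <;> norm_num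
    · rw [Fin.sum_univ_eq_sum_range (fun j => if j = 0 then (1:ℝ) else 0),
        Finset.sum_ite_eq' (Finset.range (d+1)) 0 (fun _ => (1:ℝ))]
      simp
    · have hpd : ∀ t : ℝ,
          pderiv (fun i : Fin (d+1) => if (i : ℕ) = 0 then (1:ℝ) else 0) t = 1 := by
        intro t
        unfold pderiv
        rw [Finset.sum_eq_single (⟨0, by omega⟩ : Fin (d+1))]
        · simp
        · intro b _ hb
          have hb0 : (b : ℕ) ≠ 0 := fun h => hb (by ext; exact h)
          simp [hb0]
        · intro h; exact absurd (Finset.mem_univ _) h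
      rw [hF]
      have hb : (∫⁻ t in Set.Ioo (0:ℝ) 1,
          ENNReal.ofReal ((-Real.log (1 - t)) /
            pderiv (fun i : Fin (d+1) => if (i : ℕ) = 0 then (1:ℝ) else 0) t)) ≤
          ENNReal.ofReal ((1 - 0) * (-Real.log (1 - 0)) + 4 * (1 - 0)) := by
        calc (∫⁻ t in Set.Ioo (0:ℝ) 1,
            ENNReal.ofReal ((-Real.log (1 - t)) /
              pderiv (fun i : Fin (d+1) => if (i : ℕ) = 0 then (1:ℝ) else 0) t))
            = ∫⁻ t in Set.Ioo (0:ℝ) 1, ENNReal.ofReal (-Real.log (1 - t)) := by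
              apply lintegral_congr
              intro t
              rw [hpd t, div_one]
          _ ≤ ∫⁻ t in Set.Ico (0:ℝ) 1, ENNReal.ofReal (-Real.log (1 - t)) :=
              lintegral_mono_set Set.Ioo_subset_Ico_self
          _ ≤ _ := loglint_bound le_rfl (by norm_num)
      exact lt_of_le_of_lt hb (by norm_num [ENNReal.ofReal_lt_top])
  · -- finite case
    obtain ⟨Fr, hFrdef⟩ : ∃ x : ℝ, x = (∫⁻ t in Set.Ioo (0 : ℝ) 1,
      ENNReal.ofReal ((-Real.log (1 - t)) / pderiv p t)).toReal := ⟨_, rfl⟩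
    have hFr0 : 0 ≤ Fr := hFrdef ▸ ENNReal.toReal_nonneg
    obtain ⟨F₁, hF₁def⟩ : ∃ x : ℝ, x = Fr + 1 := ⟨_, rfl⟩
    have hF₁ : 1 ≤ F₁ := by rw [hF₁def]; linarith
    have hd2 : (2:ℝ) ≤ (d:ℝ) := by exact_mod_cast hd
    have hd0 : (0:ℝ) < d := by linarith
    obtain ⟨M, hMdef⟩ : ∃ x : ℝ, x = 100 * (d:ℝ)^2 * F₁ := ⟨_, rfl⟩
    have hM100 : 100 * (d:ℝ)^2 * F₁ ≤ M := hMdef.ge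
    have hM8 : 8 ≤ M := by
      rw [hMdef]
      nlinarith only [hd2, hF₁, sq_nonneg ((d:ℝ) - 2),
        mul_nonneg (mul_nonneg (by norm_num : (0:ℝ) ≤ 100) (sq_nonneg (d:ℝ)))
          (by linarith : (0:ℝ) ≤ F₁ - 1)]
    obtain ⟨k, hkdef⟩ : ∃ n : ℕ, n = d + 1 + ⌈Real.exp M⌉₊ := ⟨_, rfl⟩
    have hkR : Real.exp M ≤ (k:ℝ) := by
      rw [hkdef]
      calc Real.exp M ≤ (⌈Real.exp M⌉₊ : ℝ) := Nat.le_ceil _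
        _ ≤ ((d + 1 + ⌈Real.exp M⌉₊ : ℕ):ℝ) := by exact_mod_cast Nat.le_add_left _ _
    have hk0 : (0:ℝ) < k := lt_of_lt_of_le (Real.exp_pos M) hkR
    obtain ⟨L, hLdef⟩ : ∃ x : ℝ, x = Real.log k := ⟨_, rfl⟩
    have hML : M ≤ L := by
      rw [hLdef]
      have h := Real.log_le_log (Real.exp_pos M) hkR
      rwa [Real.log_exp] at h
    have hL8 : 8 ≤ L := le_trans hM8 hML
    have hL0 : 0 < L := by linarith
    have hLk : L ≤ (k:ℝ) := by
      have := Real.log_le_sub_one_of_pos hk0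
      rw [hLdef]; linarith
    have hkd : d + 1 ≤ k := by rw [hkdef]; omega
    have hk3 : (3:ℝ) ≤ k := by exact_mod_cast (by omega : 3 ≤ k)
    obtain ⟨ε, hεdef⟩ : ∃ x : ℝ, x = L / (4 * (d:ℝ) * k * F₁) := ⟨_, rfl⟩
    have hden : (0:ℝ) < 4 * (d:ℝ) * k * F₁ :=
      mul_pos (mul_pos (mul_pos (by norm_num : (0:ℝ) < 4) hd0) hk0) (by linarith)
    have hε0 : 0 < ε := hεdef ▸ div_pos hL0 hden
    have hε2 : ε ≤ 1/2 := by
      rw [hεdef, div_le_iff₀ hden]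
      have h2df : (1:ℝ) ≤ 2*(d:ℝ)*F₁ := by nlinarith only [hd2, hF₁]
      have h2k := mul_le_mul_of_nonneg_right h2df hk0.le
      linarith only [h2k, hLk]
    have h1ε : (1:ℝ)/2 ≤ 1 - ε := by linarith
    obtain ⟨s, hsdef⟩ : ∃ x : ℝ, x = 1 - 1/(k:ℝ) := ⟨_, rfl⟩
    have hks : (0:ℝ) < 1/(k:ℝ) := by positivity
    have hk13 : 1/(k:ℝ) ≤ 1/3 := one_div_le_one_div_of_le (by norm_num) hk3
    have hs0 : 0 < s := by rw [hsdef]; linarith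
    have hs1 : s < 1 := by rw [hsdef]; linarith
    have hms : 1 - s = 1/(k:ℝ) := by rw [hsdef]; ring
    have hLs : -Real.log (1 - s) = L := by
      rw [hms, one_div, Real.log_inv, neg_neg, hLdef]
    have hs12 : 1/2 ≤ s := by rw [hsdef]; linarith
    -- s ^ k ≥ 1/8
    have hskexp : Real.exp (-2) ≤ s ^ k := by
      have ha : Real.log s⁻¹ ≤ s⁻¹ - 1 := Real.log_le_sub_one_of_pos (by positivity)
      rw [Real.log_inv] at ha
      have hcalc : s⁻¹ - 1 = (1 - s)/s := by field_simp
      have hb : (1 - s)/s ≤ (1 - s)/(1/2) :=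
        div_le_div_of_nonneg_left (by linarith) (by norm_num) hs12
      have hc : (1 - s)/(1/2) = 2*(1 - s) := by ring
      have hlog : -(2 * (1 - s)) ≤ Real.log s := by
        rw [hcalc] at ha; rw [hc] at hb; linarith
      have hk1s : (k:ℝ) * (1 - s) = 1 := by
        rw [hms]; field_simp
      have hk2 : -2 ≤ (k:ℝ) * Real.log s := by
        have h6 := mul_le_mul_of_nonneg_left hlog hk0.le
        have h7 : (k:ℝ) * -(2 * (1 - s)) = -2 := by linear_combination (-2 : ℝ) * hk1s
        linarith
      calc Real.exp (-2) ≤ Real.exp ((k:ℝ) * Real.log s) := Real.exp_le_exp.mpr hk2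
        _ = Real.exp (Real.log s) ^ k := by rw [← Real.exp_nat_mul]
        _ = s ^ k := by rw [Real.exp_log hs0]
    have hexp2 : (1:ℝ)/8 ≤ Real.exp (-2) := by
      have h1 : Real.exp (-2 : ℝ) = (Real.exp 1 * Real.exp 1)⁻¹ := by
        rw [← Real.exp_add, ← Real.exp_neg]
        norm_num
      rw [h1]
      have h2 := Real.exp_one_lt_d9
      have h3 := Real.exp_pos 1
      have h4 : Real.exp 1 * Real.exp 1 ≤ 8 := by nlinarith only [h2, h3]
      calc (1:ℝ)/8 ≤ 1/(Real.exp 1 * Real.exp 1) :=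
            one_div_le_one_div_of_le (by positivity) h4
        _ = (Real.exp 1 * Real.exp 1)⁻¹ := one_div _
    have hsk8 : (1:ℝ)/8 ≤ s ^ k := le_trans hexp2 hskexp
    obtain ⟨c, hcdef⟩ : ∃ x : ℝ, x = ε * ((k:ℝ) + 1) * s ^ k := ⟨_, rfl⟩
    have hc0 : 0 < c := by
      rw [hcdef]
      exact mul_pos (mul_pos hε0 (by linarith)) (pow_pos hs0 k)
    have hck : ε * (k:ℝ) / 8 ≤ c := by
      rw [hcdef]
      have h8 : ε * (k:ℝ) * (1/8) ≤ ε * ((k:ℝ)+1) * s^k := by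
        apply mul_le_mul
        · nlinarith only [hε0, hk0]
        · exact hsk8
        · norm_num
        · positivity
      linarith
    have hdk : d ≤ k := by omega
    -- the improved distribution
    refine ⟨k + 1, by omega, qext p k ε, qext_nonneg hp0 hε0.le (by linarith),
      qext_sum hp1 hdk ε, ?_⟩
    -- splitting the interval
    have hsplit : Set.Ioo (0:ℝ) 1 = Set.Ioo 0 s ∪ Set.Ico s 1 :=
      (Set.Ioo_union_Ico_eq_Ioo hs0 hs1.le).symm
    have hdisj : Disjoint (Set.Ioo (0:ℝ) s) (Set.Ico s 1) := by
      apply Set.disjoint_left.mpr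
      intro x hx hx'
      exact absurd hx.2 (not_lt.mpr hx'.1)
    have hsplitint : ∀ f : ℝ → ENNReal, ∫⁻ t in Set.Ioo (0:ℝ) 1, f t =
        (∫⁻ t in Set.Ioo (0:ℝ) s, f t) + ∫⁻ t in Set.Ico s 1, f t := by
      intro f
      rw [hsplit, lintegral_union measurableSet_Ico hdisj]
    obtain ⟨A, hAdef⟩ : ∃ x : ENNReal, x = ∫⁻ t in Set.Ioo (0:ℝ) s,
      ENNReal.ofReal ((-Real.log (1 - t)) / pderiv p t) := ⟨_, rfl⟩
    obtain ⟨G, hGdef⟩ : ∃ x : ENNReal, x = ∫⁻ t in Set.Ico s (1:ℝ),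
      ENNReal.ofReal ((-Real.log (1 - t)) / pderiv p t) := ⟨_, rfl⟩
    have hFAG : (∫⁻ t in Set.Ioo (0 : ℝ) 1,
        ENNReal.ofReal ((-Real.log (1 - t)) / pderiv p t)) = A + G := by
      rw [hAdef, hGdef]; exact hsplitint _
    have hA : A ≠ ⊤ := by
      intro h
      exact hF (by rw [hFAG, h, top_add])
    have hAF : A ≤ ∫⁻ t in Set.Ioo (0 : ℝ) 1,
        ENNReal.ofReal ((-Real.log (1 - t)) / pderiv p t) := hFAG ▸ le_self_add
    -- pointwise facts for q
    have hq_Ioo : ∀ t ∈ Set.Ioo (0:ℝ) s, (1 - ε) * pderiv p t ≤ pderiv (qext p k ε) t := by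
      intro t ht
      rw [qext_pderiv p hdk ε t]
      have h9 : 0 ≤ ε * ((k:ℝ) + 1) * t ^ k :=
        mul_nonneg (mul_nonneg hε0.le (by linarith)) (pow_nonneg ht.1.le k)
      linarith
    have hq_Ico : ∀ t ∈ Set.Ico s (1:ℝ), c ≤ pderiv (qext p k ε) t := by
      intro t ht
      rw [qext_pderiv p hdk ε t]
      have ht0 : 0 < t := lt_of_lt_of_le hs0 ht.1
      have h1 : 0 ≤ (1 - ε) * pderiv p t :=
        mul_nonneg (by linarith) (pderiv_pos hp0 hp1 ht0).le
      have h2 : c ≤ ε * ((k:ℝ) + 1) * t ^ k := by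
        rw [hcdef]
        exact mul_le_mul_of_nonneg_left (pow_le_pow_left₀ hs0.le ht.1 k)
          (mul_nonneg hε0.le (by linarith))
      linarith
    -- the three bounds
    have hB1 := bound_I1 hp0 hp1 (by linarith : ε < 1) hs1.le hq_Ioo
    have hB2 := bound_I2 (qext p k ε) hc0 hs0.le hs1 hq_Ico
    have hB3 := bound_I3 hp0 hp1 (by omega : 0 < d) hs0 hs1
    -- final arithmetic
    rw [hsplitint (fun t => ENNReal.ofReal ((-Real.log (1 - t)) / pderiv (qext p k ε) t)),
      hFAG]
    rw [← hAdef] at hB1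
    rw [← hGdef] at hB3
    have hη : (1/c) * ((1 - s) * (-Real.log (1 - s)) + 4 * (1 - s)) =
        (1/c) * ((1/(k:ℝ)) * L + 4 * (1/(k:ℝ))) := by rw [hLs, hms]
    rw [hη] at hB2
    have h1εne : (1:ℝ) - ε ≠ 0 := by linarith
    have e1 : ε / (1 - ε) ≤ 2 * ε := by
      rw [div_le_iff₀ (by linarith : (0:ℝ) < 1 - ε)]
      nlinarith only [hε0, hε2]
    have hFofReal : (∫⁻ t in Set.Ioo (0 : ℝ) 1,
        ENNReal.ofReal ((-Real.log (1 - t)) / pderiv p t)) = ENNReal.ofReal Fr := by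
      rw [hFrdef, ENNReal.ofReal_toReal hF]
    have hεF : 0 ≤ ε / (1 - ε) := div_nonneg hε0.le (by linarith)
    have key1 : ENNReal.ofReal (1 / (1 - ε)) * A ≤ A + ENNReal.ofReal (2 * ε * Fr) := by
      have hsum : 1 / (1 - ε) = 1 + ε / (1 - ε) := by
        field_simp
        ring
      rw [hsum, ENNReal.ofReal_add (by norm_num) hεF, ENNReal.ofReal_one, add_mul, one_mul]
      apply add_le_add_right
      calc ENNReal.ofReal (ε / (1 - ε)) * A
          ≤ ENNReal.ofReal (ε / (1 - ε)) * ENNReal.ofReal Fr := by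
            rw [← hFofReal]; exact mul_le_mul_right hAF _
        _ = ENNReal.ofReal (ε / (1 - ε) * Fr) := (ENNReal.ofReal_mul hεF).symm
        _ ≤ ENNReal.ofReal (2 * ε * Fr) :=
            ENNReal.ofReal_le_ofReal (mul_le_mul_of_nonneg_right e1 hFr0)
    have hdkpos : (0:ℝ) < 2 * (d:ℝ) * k := by positivity
    have e3 : 2 * ε * Fr ≤ L / (2 * (d:ℝ) * k) := by
      have h1 : 2 * ε * Fr = (2 * L * Fr) / (4 * (d:ℝ) * k * F₁) := by rw [hεdef]; ring
      rw [h1, div_le_div_iff₀ hden hdkpos, hF₁def]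
      nlinarith only [mul_pos (mul_pos hd0 hk0) hL0, hFr0, hd0.le, hk0.le, hL0.le]
    have hF₁0 : (0:ℝ) < F₁ := by linarith
    have hc_low : L / (32 * (d:ℝ) * F₁) ≤ c := by
      have hek : ε * (k:ℝ) / 8 = L / (32 * (d:ℝ) * F₁) := by
        rw [hεdef]; field_simp; ring
      rw [hek] at hck
      exact hck
    have h1c : 1/c ≤ 32 * (d:ℝ) * F₁ / L := by
      have h2 := one_div_le_one_div_of_le (div_pos hL0 (by positivity)) hc_low
      rwa [one_div_div] at h2
    have e4 : (1/c) * ((1/(k:ℝ)) * L + 4 * (1/(k:ℝ))) < L / (2 * (d:ℝ) * k) := by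
      have hX : (1/(k:ℝ)) * L + 4 * (1/(k:ℝ)) = (L + 4) / (k:ℝ) := by ring
      rw [hX]
      have hterm : (1/c) * ((L + 4)/(k:ℝ)) ≤ (32 * (d:ℝ) * F₁ / L) * ((L + 4)/(k:ℝ)) :=
        mul_le_mul_of_nonneg_right h1c (div_nonneg (by linarith) hk0.le)
      have key : 64 * (d:ℝ)^2 * F₁ * (L + 4) < L^2 := by
        have hXL : 100 * ((d:ℝ)^2 * F₁) ≤ L := by linarith only [hM100, hML]
        have h1 : 0 ≤ (L - 100 * ((d:ℝ)^2 * F₁)) * L := mul_nonneg (by linarith) hL0.le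
        have h2 : 0 ≤ (L - 8) * ((d:ℝ)^2 * F₁) :=
          mul_nonneg (by linarith) (by positivity)
        nlinarith only [h1, h2, mul_pos hL0 hL0]
      have hfin : (32 * (d:ℝ) * F₁ / L) * ((L + 4)/(k:ℝ)) < L / (2 * (d:ℝ) * k) := by
        rw [div_mul_div_comm, div_lt_div_iff₀ (by positivity) hdkpos]
        nlinarith only [mul_pos (sub_pos.mpr key) hk0]
      linarith
    have hγ : L / (2 * (d:ℝ) * k) + L / (2 * (d:ℝ) * k) = L / (d:ℝ) * (1/(k:ℝ)) := by
      field_simp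
      ring
    have hreal : 2 * ε * Fr + (1/c) * ((1/(k:ℝ)) * L + 4 * (1/(k:ℝ))) <
        L / (d:ℝ) * (1/(k:ℝ)) := by
      rw [← hγ]; exact add_lt_add_of_le_of_lt e3 e4
    have hγpos : (0:ℝ) < L / (d:ℝ) * (1/(k:ℝ)) :=
      mul_pos (div_pos hL0 hd0) (one_div_pos.mpr hk0)
    have hB3' : ENNReal.ofReal (L / (d:ℝ) * (1/(k:ℝ))) ≤ G := by
      have heq : ENNReal.ofReal ((-Real.log (1 - s)) / d) * ENNReal.ofReal (1 - s) =
          ENNReal.ofReal (L / (d:ℝ) * (1/(k:ℝ))) := by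
        rw [hLs, hms, ← ENNReal.ofReal_mul (div_nonneg hL0.le hd0.le)]
      rw [← heq]
      exact hB3
    have hη0 : 0 ≤ (1/c) * ((1/(k:ℝ)) * L + 4 * (1/(k:ℝ))) := by
      apply mul_nonneg (by positivity)
      have := hks
      positivity
    have hεFr0 : 0 ≤ 2 * ε * Fr := by positivity
    calc (∫⁻ t in Set.Ioo (0:ℝ) s,
            ENNReal.ofReal ((-Real.log (1 - t)) / pderiv (qext p k ε) t)) +
          ∫⁻ t in Set.Ico s 1,
            ENNReal.ofReal ((-Real.log (1 - t)) / pderiv (qext p k ε) t)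
        ≤ (ENNReal.ofReal (1/(1-ε)) * A) +
            ENNReal.ofReal ((1/c) * ((1/(k:ℝ)) * L + 4 * (1/(k:ℝ)))) := add_le_add hB1 hB2
      _ ≤ (A + ENNReal.ofReal (2 * ε * Fr)) +
            ENNReal.ofReal ((1/c) * ((1/(k:ℝ)) * L + 4 * (1/(k:ℝ)))) := add_le_add_left key1 _
      _ = A + ENNReal.ofReal (2 * ε * Fr + (1/c) * ((1/(k:ℝ)) * L + 4 * (1/(k:ℝ)))) := by
          rw [add_assoc, ENNReal.ofReal_add hεFr0 hη0]
      _ < A + ENNReal.ofReal (L / (d:ℝ) * (1/(k:ℝ))) :=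
          ENNReal.add_lt_add_left hA
            ((ENNReal.ofReal_lt_ofReal_iff hγpos).mpr hreal)
      _ ≤ A + G := add_le_add_right hB3' A
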